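/- arXiv:1404.1957 — 3 statements merged into one kernel-verified Lean document; each statement's English description precedes it below -/
import Mathlib

section
/- Let Q be a symmetric positive definite d×d real matrix and κ₀ > 0 be such that κ₀|y|² ≤ yᵀ(QR + RᵀQ)y for all y ∈ ℝ^d, and define V(x) := (xᵀQx)^{m/2}. Then there exists a constant C > 0 (depending only on Q, R, Γ, m, d) such that, setting δ := κ₀/(4C), for every u ∈ 𝒮 and every x ∈ ℝ^d with |x| ≥ 1 and (e·x)⁺ ≤ δ|x| one has ∇V(x)·b(x,u) ≤ ℓ·∇V(x) − (mκ₀/4)(xᵀQx)^{(m/2)−1}|x|². -/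
set_option autoImplicit false

open Matrix Set

noncomputable section

abbrev EucSp (d : ℕ) := EuclideanSpace ℝ (Fin d)

/-- The probability simplex in `ℝ^d`. -/
def simplex (d : ℕ) : Set (EucSp d) := {u | (∀ i, 0 ≤ u i) ∧ (∑ i, u i) = 1}

/-- First partial derivative `∂f/∂xᵢ`. -/
noncomputable def pd1 {d : ℕ} (f : EucSp d → ℝ) (i : Fin d) (x : EucSp d) : ℝ :=
  fderiv ℝ f x (EuclideanSpace.single i 1)

/-- The piecewise linear drift `b(x,u) = ℓ − R(x − (e·x)⁺u) − (e·x)⁺Γu`. -/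
noncomputable def qdrift {d : ℕ} (ℓ : EucSp d) (R Γ : Matrix (Fin d) (Fin d) ℝ)
    (x u : EucSp d) (i : Fin d) : ℝ :=
  ℓ i - R.mulVec (fun j => x j - max (∑ k, x k) 0 * u j) i
    - max (∑ k, x k) 0 * Γ.mulVec u i

/-- The quadratic form `xᵀQx`. -/
def quadForm {d : ℕ} (Q : Matrix (Fin d) (Fin d) ℝ) (x : EucSp d) : ℝ :=
  ∑ i, ∑ j, x i * (Q i j * x j)

/-- The Lyapunov candidate `V(x) = (xᵀQx)^{m/2}`. -/
noncomputable def Vq {d : ℕ} (Q : Matrix (Fin d) (Fin d) ℝ) (m : ℝ) (x : EucSp d) : ℝ :=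
  quadForm Q x ^ (m / 2)

lemma quadForm_hasFDerivAt {d : ℕ} (Q : Matrix (Fin d) (Fin d) ℝ) (x : EucSp d) :
    HasFDerivAt (quadForm Q)
      (∑ i, ∑ j, (x i • ((Q i j) • (EuclideanSpace.proj j : EucSp d →L[ℝ] ℝ))
        + (Q i j * x j) • (EuclideanSpace.proj i : EucSp d →L[ℝ] ℝ))) x := by
  have : quadForm Q = fun y : EucSp d => ∑ i, ∑ j, y i * (Q i j * y j) := rfl
  rw [this]
  apply HasFDerivAt.fun_sum; intro i _
  apply HasFDerivAt.fun_sum; intro j _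
  have hi : HasFDerivAt (fun y : EucSp d => y i) ((EuclideanSpace.proj i : EucSp d →L[ℝ] ℝ)) x :=
    ((EuclideanSpace.proj i : EucSp d →L[ℝ] ℝ)).hasFDerivAt
  have hj : HasFDerivAt (fun y : EucSp d => Q i j * y j)
      ((Q i j) • (EuclideanSpace.proj j : EucSp d →L[ℝ] ℝ)) x :=
    (((EuclideanSpace.proj j : EucSp d →L[ℝ] ℝ)).hasFDerivAt).const_mul (Q i j)
  exact hi.mul hj

lemma quadForm_eq_dot {d : ℕ} (Q : Matrix (Fin d) (Fin d) ℝ) (x : EucSp d) :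
    quadForm Q x = (WithLp.equiv 2 _ x) ⬝ᵥ Q.mulVec (WithLp.equiv 2 _ x) := by
  simp [quadForm, dotProduct, Matrix.mulVec, Finset.mul_sum]

lemma quadForm_pos {d : ℕ} {Q : Matrix (Fin d) (Fin d) ℝ} (hQ : Q.PosDef) {x : EucSp d}
    (hx : x ≠ 0) : 0 < quadForm Q x := by
  rw [quadForm_eq_dot]
  have := hQ.dotProduct_mulVec_pos (x := WithLp.equiv 2 _ x) (by simpa using hx)
  simpa using this

lemma pd1_Vq {d : ℕ} (Q : Matrix (Fin d) (Fin d) ℝ) (hQsymm : Q.IsSymm) (m : ℝ)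
    {x : EucSp d} (hpos : 0 < quadForm Q x) (k : Fin d) :
    pd1 (Vq Q m) k x = m * quadForm Q x ^ (m / 2 - 1) * Q.mulVec (WithLp.equiv 2 _ x) k := by
  have hq := quadForm_hasFDerivAt Q x
  have hV : HasFDerivAt (Vq Q m)
      ((m / 2 * quadForm Q x ^ (m / 2 - 1)) •
        (∑ i, ∑ j, (x i • ((Q i j) • (EuclideanSpace.proj j : EucSp d →L[ℝ] ℝ))
          + (Q i j * x j) • (EuclideanSpace.proj i : EucSp d →L[ℝ] ℝ)))) x :=
    hq.rpow_const (Or.inl (ne_of_gt hpos))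
  rw [pd1, hV.fderiv]
  simp only [ContinuousLinearMap.smul_apply, ContinuousLinearMap.sum_apply,
    ContinuousLinearMap.add_apply, PiLp.proj_apply, smul_eq_mul]
  have hsing : ∀ j : Fin d, (EuclideanSpace.single k 1 : EucSp d) j = if j = k then 1 else 0 := by
    intro j; by_cases h : j = k <;> simp [h, EuclideanSpace.single_apply]
  have : ∀ i j : Fin d, Q j i = Q i j := fun i j => by
    conv_lhs => rw [← hQsymm]
    rfl
  simp only [hsing, mul_ite, mul_one, mul_zero, ite_mul, zero_mul,
    Finset.sum_add_distrib, Finset.sum_ite_eq', Finset.mem_univ, if_true]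
  have h1 : ∑ i : Fin d, x i * Q i k = (Q *ᵥ (WithLp.equiv 2 (Fin d → ℝ)) x) k := by
    simp [Matrix.mulVec, dotProduct]
    exact Finset.sum_congr rfl fun i _ => by rw [this k i]; ring
  have h2 : (∑ i : Fin d, ∑ j : Fin d, if i = k then Q i j * x j else 0)
      = (Q *ᵥ (WithLp.equiv 2 (Fin d → ℝ)) x) k := by
    have hpull : ∀ i : Fin d, (∑ j, if i = k then Q i j * x j else 0)
        = if i = k then ∑ j, Q i j * x j else 0 := fun i => by split <;> simp
    rw [Finset.sum_congr rfl fun i _ => hpull i,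
      Finset.sum_ite_eq' Finset.univ k (fun i => ∑ j, Q i j * x j)]
    simp [Matrix.mulVec, dotProduct]
  rw [h1, h2]
  ring

noncomputable def matCLM {d : ℕ} (N : Matrix (Fin d) (Fin d) ℝ) : EucSp d →L[ℝ] EucSp d :=
  LinearMap.toContinuousLinearMap (Matrix.toEuclideanLin N)

lemma dot_mulVec_le {d : ℕ} (N : Matrix (Fin d) (Fin d) ℝ) (v w : EucSp d) :
    |∑ k, v k * N.mulVec w k| ≤ ‖matCLM N‖ * ‖v‖ * ‖w‖ := by
  have h1 : ∑ k, v k * N.mulVec w k = (inner ℝ v (matCLM N w) : ℝ) := by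
    rw [PiLp.inner_apply]
    refine Finset.sum_congr rfl fun k _ => ?_
    simp only [matCLM, LinearMap.coe_toContinuousLinearMap', Matrix.toEuclideanLin_apply,
      RCLike.inner_apply, conj_trivial]
    exact mul_comm _ _
  rw [h1]
  calc |(inner ℝ v (matCLM N w) : ℝ)| ≤ ‖v‖ * ‖matCLM N w‖ := abs_real_inner_le_norm _ _
    _ ≤ ‖v‖ * (‖matCLM N‖ * ‖w‖) := by
        have := (matCLM N).le_opNorm w
        exact mul_le_mul_of_nonneg_left this (norm_nonneg _)
    _ = ‖matCLM N‖ * ‖v‖ * ‖w‖ := by ring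

lemma sum_mulVec_mulVec {d : ℕ} (Q M : Matrix (Fin d) (Fin d) ℝ) (hQsymm : Q.IsSymm)
    (xf vf : Fin d → ℝ) :
    ∑ k, Q.mulVec xf k * M.mulVec vf k = ∑ i, xf i * (Q * M).mulVec vf i := by
  have hsym : ∀ i j : Fin d, Q j i = Q i j := fun i j => by
    conv_lhs => rw [← hQsymm]
    rfl
  set w := M.mulVec vf with hw
  have : ∀ i, (Q * M).mulVec vf i = Q.mulVec w i := by
    intro i; rw [hw, Matrix.mulVec_mulVec]
  simp only [this]
  simp only [Matrix.mulVec, dotProduct, Finset.sum_mul, Finset.mul_sum]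
  rw [Finset.sum_comm]
  exact Finset.sum_congr rfl fun i _ => Finset.sum_congr rfl fun k _ => by rw [hsym i k]; ring

lemma quadForm_eq_sum {d : ℕ} (N : Matrix (Fin d) (Fin d) ℝ) (x : EucSp d) :
    quadForm N x = ∑ i, x i * N.mulVec x i := by
  simp [quadForm, Matrix.mulVec, dotProduct, Finset.mul_sum]

lemma quadForm_transpose {d : ℕ} (N : Matrix (Fin d) (Fin d) ℝ) (x : EucSp d) :
    quadForm Nᵀ x = quadForm N x := by
  unfold quadForm
  rw [Finset.sum_comm]
  exact Finset.sum_congr rfl fun i _ => Finset.sum_congr rfl fun j _ => by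
    rw [Matrix.transpose_apply]; ring

lemma quadForm_add {d : ℕ} (M N : Matrix (Fin d) (Fin d) ℝ) (x : EucSp d) :
    quadForm (M + N) x = quadForm M x + quadForm N x := by
  simp [quadForm, Matrix.add_apply, mul_add, add_mul, Finset.sum_add_distrib]

lemma simplex_norm_le {d : ℕ} (u : EucSp d) (h0 : ∀ i, 0 ≤ u i) (h1 : (∑ i, u i) = 1) :
    ‖u‖ ≤ 1 := by
  rw [EuclideanSpace.norm_eq]
  rw [show (1 : ℝ) = Real.sqrt 1 by simp]
  apply Real.sqrt_le_sqrt
  calc ∑ i, ‖u i‖ ^ 2 = ∑ i, u i ^ 2 := by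
        exact Finset.sum_congr rfl fun i _ => by rw [Real.norm_eq_abs, sq_abs]
    _ ≤ (∑ i, u i) ^ 2 := Finset.sum_sq_le_sq_sum_of_nonneg fun i _ => h0 i
    _ = 1 := by rw [h1]; norm_num

set_option maxHeartbeats 1000000 in
theorem stmt1 (d : ℕ) (hd : 1 ≤ d) (m : ℝ) (hm : 1 ≤ m)
    (ℓ : EucSp d) (R Γ Q : Matrix (Fin d) (Fin d) ℝ)
    (hQsymm : Q.IsSymm) (hQpos : Q.PosDef)
    (κ₀ : ℝ) (hκ₀ : 0 < κ₀)
    (hQR : ∀ y : EucSp d,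
      κ₀ * ‖y‖ ^ 2 ≤ ∑ i, ∑ j, y i * ((Q * R + Rᵀ * Q) i j * y j)) :
    ∃ C : ℝ, 0 < C ∧
      ∀ (u x : EucSp d), u ∈ simplex d → 1 ≤ ‖x‖ →
        max (∑ i, x i) 0 ≤ (κ₀ / (4 * C)) * ‖x‖ →
        ∑ i, pd1 (Vq Q m) i x * qdrift ℓ R Γ x u i ≤
          ∑ i, ℓ i * pd1 (Vq Q m) i x
            - (m * κ₀ / 4) * quadForm Q x ^ (m / 2 - 1) * ‖x‖ ^ 2 := by
  set nR := ‖matCLM (Q * R)‖ with hnR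
  set nG := ‖matCLM (Q * Γ)‖ with hnG
  have hnR0 : 0 ≤ nR := norm_nonneg _
  have hnG0 : 0 ≤ nG := norm_nonneg _
  refine ⟨1 + nR + nG, by linarith, ?_⟩
  set C := 1 + nR + nG with hCdef
  have hC : 0 < C := by linarith
  intro u x hu hx hs
  obtain ⟨hu0, hu1⟩ := hu
  have hune : ‖u‖ ≤ 1 := simplex_norm_le u hu0 hu1
  set s := max (∑ i, x i) 0 with hsdef
  have hs0 : 0 ≤ s := le_max_right _ _
  have hxne : x ≠ 0 := by
    intro h; rw [h] at hx; simp at hx; linarith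
  have hqf : 0 < quadForm Q x := quadForm_pos hQpos hxne
  have hqf' : 0 < quadForm Q x ^ (m / 2 - 1) := Real.rpow_pos_of_pos hqf _
  set c := m * quadForm Q x ^ (m / 2 - 1) with hcdef
  have hcpos : 0 < c := mul_pos (by linarith) hqf'
  have hpd : ∀ k, pd1 (Vq Q m) k x = c * Q.mulVec x k := fun k => pd1_Vq Q hQsymm m hqf k
  have hRw : ∀ k, R.mulVec (fun j => x j - s * u j) k = R.mulVec x k - s * R.mulVec u k := by
    intro k
    simp [Matrix.mulVec, dotProduct, mul_sub, Finset.sum_sub_distrib, Finset.mul_sum,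
      mul_left_comm, mul_comm, mul_assoc]
  set A := ∑ k, Q.mulVec x k * R.mulVec x k with hA
  set B := ∑ k, Q.mulVec x k * R.mulVec u k with hB
  set G := ∑ k, Q.mulVec x k * Γ.mulVec u k with hG
  have hterm : ∀ k, pd1 (Vq Q m) k x * qdrift ℓ R Γ x u k
      = ℓ k * pd1 (Vq Q m) k x
        + (c * s * (Q.mulVec x k * R.mulVec u k) - c * (Q.mulVec x k * R.mulVec x k)
           - c * s * (Q.mulVec x k * Γ.mulVec u k)) := by
    intro k
    simp only [qdrift, ← hsdef]
    rw [hRw k, hpd k]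
    ring
  have hsum : (∑ k, pd1 (Vq Q m) k x * qdrift ℓ R Γ x u k)
      = (∑ k, ℓ k * pd1 (Vq Q m) k x) + (c * s * B - c * A - c * s * G) := by
    rw [Finset.sum_congr rfl fun k _ => hterm k, Finset.sum_add_distrib]
    congr 1
    rw [hA, hB, hG]
    simp only [Finset.sum_sub_distrib, ← Finset.mul_sum]
  -- lower bound for A
  have hAge : κ₀ * ‖x‖ ^ 2 ≤ 2 * A := by
    have h0 := hQR x
    have h1 : (∑ i, ∑ j, x i * ((Q * R + Rᵀ * Q) i j * x j)) = quadForm (Q * R + Rᵀ * Q) x := rfl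
    have h2 : quadForm (Q * R + Rᵀ * Q) x = 2 * quadForm (Q * R) x := by
      rw [quadForm_add]
      have h3 : (Rᵀ * Q) = (Q * R)ᵀ := by
        rw [Matrix.transpose_mul, hQsymm]
      rw [h3, quadForm_transpose]
      ring
    have h4 : quadForm (Q * R) x = A := by
      rw [quadForm_eq_sum, hA, sum_mulVec_mulVec Q R hQsymm]
    rw [h1, h2, h4] at h0
    exact h0
  have hBle : |B| ≤ nR * ‖x‖ := by
    rw [hB, sum_mulVec_mulVec Q R hQsymm]
    calc |∑ i, x i * (Q * R).mulVec u i| ≤ nR * ‖x‖ * ‖u‖ := dot_mulVec_le (Q * R) x u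
      _ ≤ nR * ‖x‖ * 1 := by
          apply mul_le_mul_of_nonneg_left hune
          positivity
      _ = nR * ‖x‖ := mul_one _
  have hGle : |G| ≤ nG * ‖x‖ := by
    rw [hG, sum_mulVec_mulVec Q Γ hQsymm]
    calc |∑ i, x i * (Q * Γ).mulVec u i| ≤ nG * ‖x‖ * ‖u‖ := dot_mulVec_le (Q * Γ) x u
      _ ≤ nG * ‖x‖ * 1 := by
          apply mul_le_mul_of_nonneg_left hune
          positivity
      _ = nG * ‖x‖ := mul_one _
  have key : s * B - A - s * G ≤ -(κ₀ / 4) * ‖x‖ ^ 2 := by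
    have e1 : s * B ≤ s * (nR * ‖x‖) :=
      mul_le_mul_of_nonneg_left (le_trans (le_abs_self B) hBle) hs0
    have e2 : -(s * G) ≤ s * (nG * ‖x‖) := by
      have : -G ≤ nG * ‖x‖ := le_trans (neg_le_abs G) hGle
      have := mul_le_mul_of_nonneg_left this hs0
      linarith [this]
    have e3 : s * (nR * ‖x‖) + s * (nG * ‖x‖) ≤ s * (C * ‖x‖) := by
      have hnC : nR + nG ≤ C := by rw [hCdef]; linarith
      have : s * ((nR + nG) * ‖x‖) ≤ s * (C * ‖x‖) := by
        apply mul_le_mul_of_nonneg_left _ hs0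
        apply mul_le_mul_of_nonneg_right hnC (norm_nonneg x)
      linarith [this, mul_add s (nR * ‖x‖) (nG * ‖x‖)]
    have e4 : s * (C * ‖x‖) ≤ (κ₀ / (4 * C) * ‖x‖) * (C * ‖x‖) := by
      apply mul_le_mul_of_nonneg_right hs
      positivity
    have e5 : (κ₀ / (4 * C) * ‖x‖) * (C * ‖x‖) = κ₀ / 4 * ‖x‖ ^ 2 := by
      field_simp
    nlinarith [hAge]
  rw [hsum]
  have final : c * s * B - c * A - c * s * G ≤ -((m * κ₀ / 4) * quadForm Q x ^ (m / 2 - 1) * ‖x‖ ^ 2) := by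
    have := mul_le_mul_of_nonneg_left key (le_of_lt hcpos)
    calc c * s * B - c * A - c * s * G = c * (s * B - A - s * G) := by ring
      _ ≤ c * (-(κ₀ / 4) * ‖x‖ ^ 2) := this
      _ = -((m * κ₀ / 4) * quadForm Q x ^ (m / 2 - 1) * ‖x‖ ^ 2) := by rw [hcdef]; ring
  linarith [final]
end
end

section
/- Let d ≥ 1, let q ≥ 2 be an even integer, and let κ > 0 and ϑ > 0. Set ε₁ := ϑ/(8κ), β₁ := 1 and, recursively, β_i := (ε₁^q/d^q)·min_{1≤j≤i−1} β_j for 2 ≤ i ≤ d. Then for every Y ∈ ℝ^d, every ξ̃ ∈ [0,1]^d and every c ∈ ℝ^d with |c_i| ≤ κ for all i, one has q·Σ_{i=1}^d β_i Y_i |Y_i|^{q−2}(−c_i ξ̃_i Σ_{j=1}^{i−1} Y_j) ≤ (qϑ/4)·Σ_{i=1}^d β_i |Y_i|^q. -/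
set_option autoImplicit false

open Finset

/-- Baby Young: `u^(q-1) * v ≤ u^q + v^q` for nonnegative reals. -/
lemma young_nat (u v : ℝ) (hu : 0 ≤ u) (hv : 0 ≤ v) (q : ℕ) (hq : 1 ≤ q) :
    u ^ (q - 1) * v ≤ u ^ q + v ^ q := by
  rcases le_total u v with h | h
  · calc u ^ (q - 1) * v ≤ v ^ (q - 1) * v := by
          exact mul_le_mul_of_nonneg_right (pow_le_pow_left₀ hu h _) hv
    _ = v ^ q := by rw [← pow_succ]; congr 1; omega
    _ ≤ u ^ q + v ^ q := le_add_of_nonneg_left (pow_nonneg hu q)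
  · calc u ^ (q - 1) * v ≤ u ^ (q - 1) * u := by
          exact mul_le_mul_of_nonneg_left h (pow_nonneg hu _)
    _ = u ^ q := by rw [← pow_succ]; congr 1; omega
    _ ≤ u ^ q + v ^ q := le_add_of_nonneg_right (pow_nonneg hv q)

/-- Scaled Young inequality. -/
lemma young_scaled (x y t : ℝ) (hx : 0 ≤ x) (hy : 0 ≤ y) (ht : 0 < t)
    (q : ℕ) (hq : 1 ≤ q) :
    x ^ (q - 1) * y ≤ t * x ^ q + y ^ q / t ^ (q - 1) := by
  have h := young_nat x (y / t) hx (by positivity) q hq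
  have ht' : t ≠ 0 := ht.ne'
  have h2 : x ^ (q - 1) * y = t * (x ^ (q - 1) * (y / t)) := by
    field_simp
  rw [h2]
  calc t * (x ^ (q - 1) * (y / t)) ≤ t * (x ^ q + (y / t) ^ q) := by
        exact mul_le_mul_of_nonneg_left h ht.le
  _ = t * x ^ q + y ^ q / t ^ (q - 1) := by
        rw [mul_add]
        congr 1
        rw [div_pow]
        rw [show t ^ q = t ^ (q - 1) * t by rw [← pow_succ]; congr 1; omega]
        field_simp

theorem stmt15 (d : ℕ) (hd : 1 ≤ d) (q : ℕ) (hqeven : Even q) (hq2 : 2 ≤ q)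
    (κ ϑ : ℝ) (hκ : 0 < κ) (hϑ : 0 < ϑ)
    (β : Fin d → ℝ)
    (hβ0 : ∀ i : Fin d, i.val = 0 → β i = 1)
    (hβrec : ∀ i : Fin d, ∀ hne : (Finset.univ.filter (fun j => j < i)).Nonempty,
      β i = ((ϑ / (8 * κ)) ^ q / (d : ℝ) ^ q) *
        (Finset.univ.filter (fun j => j < i)).inf' hne β) :
    ∀ (Y ξt c : Fin d → ℝ),
      (∀ i, ξt i ∈ Set.Icc (0:ℝ) 1) → (∀ i, |c i| ≤ κ) →
      (q : ℝ) * ∑ i, β i * Y i * |Y i| ^ (q - 2) *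
          (-(c i) * ξt i * ∑ j ∈ Finset.univ.filter (fun j => j < i), Y j)
        ≤ ((q : ℝ) * ϑ / 4) * ∑ i, β i * |Y i| ^ q := by
  intro Y ξt c hξ hc
  have hdpos : (0 : ℝ) < d := by exact_mod_cast hd
  set t : ℝ := ϑ / (8 * κ * d) with ht_def
  have htpos : 0 < t := by positivity
  have hTeq : (ϑ / (8 * κ)) ^ q / (d : ℝ) ^ q = t ^ q := by
    rw [← div_pow, div_div]
  -- positivity of β
  have hβpos : ∀ i : Fin d, 0 < β i := by
    have key : ∀ n : ℕ, ∀ i : Fin d, i.val ≤ n → 0 < β i := by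
      intro n
      induction n with
      | zero =>
        intro i hi
        rw [hβ0 i (Nat.le_zero.mp hi)]; exact one_pos
      | succ n ih =>
        intro i hi
        rcases Nat.eq_zero_or_pos i.val with h0 | hpos
        · rw [hβ0 i h0]; exact one_pos
        · have hne : (Finset.univ.filter (fun j => j < i)).Nonempty := by
            refine ⟨⟨0, by omega⟩, ?_⟩
            simp only [Finset.mem_filter, Finset.mem_univ, true_and]
            exact Fin.mk_lt_of_lt_val hpos
          rw [hβrec i hne, hTeq]
          obtain ⟨j, hjmem, hjeq⟩ := Finset.exists_mem_eq_inf' hne β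
          rw [hjeq]
          have hj : j < i := (Finset.mem_filter.mp hjmem).2
          have hjβ : 0 < β j := ih j (by omega)
          positivity
    exact fun i => key i.val i le_rfl
  -- the recursion bound
  have hβle : ∀ i j : Fin d, j < i → β i ≤ t ^ q * β j := by
    intro i j hji
    have hne : (Finset.univ.filter (fun j => j < i)).Nonempty :=
      ⟨j, Finset.mem_filter.mpr ⟨Finset.mem_univ _, hji⟩⟩
    rw [hβrec i hne, hTeq]
    gcongr
    apply Finset.inf'_le
    exact Finset.mem_filter.mpr ⟨Finset.mem_univ _, hji⟩
  -- abbreviation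
  set A : Fin d → ℝ := fun i => (ϑ / (8 * d)) * (β i * |Y i| ^ q) with hA_def
  have hA_nonneg : ∀ i, 0 ≤ A i := by
    intro i
    have := (hβpos i).le
    positivity
  -- pairwise Young bound
  have hpair : ∀ i j : Fin d, j < i →
      κ * (β i * (|Y i| ^ (q - 1) * |Y j|)) ≤ A i + A j := by
    intro i j hji
    have hy := young_scaled |Y i| |Y j| t (abs_nonneg _) (abs_nonneg _) htpos q (by omega)
    have hβi := hβpos i
    have h1 : κ * (β i * (|Y i| ^ (q - 1) * |Y j|)) ≤
        κ * (β i * (t * |Y i| ^ q + |Y j| ^ q / t ^ (q - 1))) := by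
      apply mul_le_mul_of_nonneg_left _ hκ.le
      exact mul_le_mul_of_nonneg_left hy hβi.le
    refine h1.trans ?_
    have expand : κ * (β i * (t * |Y i| ^ q + |Y j| ^ q / t ^ (q - 1))) =
        (κ * t) * (β i * |Y i| ^ q) + (κ * (β i / t ^ (q - 1))) * |Y j| ^ q := by
      ring
    rw [expand]
    have hκt : κ * t = ϑ / (8 * d) := by
      rw [ht_def]; field_simp
    have h2 : (κ * t) * (β i * |Y i| ^ q) = A i := by rw [hκt, hA_def]
    have h3 : (κ * (β i / t ^ (q - 1))) * |Y j| ^ q ≤ A j := by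
      have hb : β i / t ^ (q - 1) ≤ t * β j := by
        rw [div_le_iff₀ (by positivity)]
        calc β i ≤ t ^ q * β j := hβle i j hji
        _ = t * β j * t ^ (q - 1) := by
            rw [show t ^ q = t * t ^ (q - 1) by rw [← pow_succ']; congr 1; omega]
            ring
      calc (κ * (β i / t ^ (q - 1))) * |Y j| ^ q ≤ (κ * (t * β j)) * |Y j| ^ q := by
            apply mul_le_mul_of_nonneg_right _ (by positivity)
            exact mul_le_mul_of_nonneg_left hb hκ.le
      _ = (κ * t) * (β j * |Y j| ^ q) := by ring
      _ = A j := by rw [hκt, hA_def]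
    rw [h2]
    exact add_le_add_right h3 _
  -- main term bound per i
  have hterm : ∀ i : Fin d,
      β i * Y i * |Y i| ^ (q - 2) *
        (-(c i) * ξt i * ∑ j ∈ Finset.univ.filter (fun j => j < i), Y j)
      ≤ ∑ j ∈ Finset.univ.filter (fun j => j < i), (A i + A j) := by
    intro i
    set S := ∑ j ∈ Finset.univ.filter (fun j => j < i), Y j with hS
    have step1 : β i * Y i * |Y i| ^ (q - 2) * (-(c i) * ξt i * S)
        ≤ κ * (β i * (|Y i| ^ (q - 1) * |S|)) := by
      have habs : β i * Y i * |Y i| ^ (q - 2) * (-(c i) * ξt i * S)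
          ≤ |β i * Y i * |Y i| ^ (q - 2) * (-(c i) * ξt i * S)| := le_abs_self _
      refine habs.trans ?_
      have heq : |β i * Y i * |Y i| ^ (q - 2) * (-(c i) * ξt i * S)|
          = (|c i| * ξt i) * (β i * ((|Y i| * |Y i| ^ (q - 2)) * |S|)) := by
        simp only [abs_mul, abs_neg, abs_pow, abs_abs]
        rw [abs_of_pos (hβpos i), abs_of_nonneg (hξ i).1]
        ring
      rw [heq]
      have hpow : |Y i| * |Y i| ^ (q - 2) = |Y i| ^ (q - 1) := by
        rw [← pow_succ']; congr 1; omega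
      rw [hpow]
      apply mul_le_mul_of_nonneg_right _ (by have h := (hβpos i).le; positivity)
      calc |c i| * ξt i ≤ |c i| * 1 :=
            mul_le_mul_of_nonneg_left (hξ i).2 (abs_nonneg _)
      _ = |c i| := mul_one _
      _ ≤ κ := hc i
    refine step1.trans ?_
    have step2 : |S| ≤ ∑ j ∈ Finset.univ.filter (fun j => j < i), |Y j| := by
      rw [hS]; exact Finset.abs_sum_le_sum_abs _ _
    have step3 : κ * (β i * (|Y i| ^ (q - 1) * |S|))
        ≤ ∑ j ∈ Finset.univ.filter (fun j => j < i),
            κ * (β i * (|Y i| ^ (q - 1) * |Y j|)) := by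
      rw [← Finset.mul_sum, ← Finset.mul_sum, ← Finset.mul_sum]
      apply mul_le_mul_of_nonneg_left _ hκ.le
      apply mul_le_mul_of_nonneg_left _ (hβpos i).le
      exact mul_le_mul_of_nonneg_left step2 (by positivity)
    refine step3.trans ?_
    apply Finset.sum_le_sum
    intro j hj
    exact hpair i j (Finset.mem_filter.mp hj).2
  -- sum everything
  have hsum : ∑ i, β i * Y i * |Y i| ^ (q - 2) *
        (-(c i) * ξt i * ∑ j ∈ Finset.univ.filter (fun j => j < i), Y j)
      ≤ (ϑ / 4) * ∑ i, β i * |Y i| ^ q := by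
    calc ∑ i, β i * Y i * |Y i| ^ (q - 2) *
          (-(c i) * ξt i * ∑ j ∈ Finset.univ.filter (fun j => j < i), Y j)
        ≤ ∑ i, ∑ j ∈ Finset.univ.filter (fun j => j < i), (A i + A j) :=
          Finset.sum_le_sum fun i _ => hterm i
    _ = (∑ i, ∑ j ∈ Finset.univ.filter (fun j => j < i), A i)
        + ∑ i, ∑ j ∈ Finset.univ.filter (fun j => j < i), A j := by
          rw [← Finset.sum_add_distrib]
          exact Finset.sum_congr rfl fun i _ => Finset.sum_add_distrib
    _ ≤ (∑ i : Fin d, (d : ℝ) * A i) + ∑ i : Fin d, ∑ j : Fin d, A j := by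
          apply add_le_add
          · apply Finset.sum_le_sum
            intro i _
            rw [Finset.sum_const, nsmul_eq_mul]
            apply mul_le_mul_of_nonneg_right _ (hA_nonneg i)
            exact_mod_cast Finset.card_le_card (Finset.filter_subset _ _) |>.trans
              (by simp)
          · apply Finset.sum_le_sum
            intro i _
            exact Finset.sum_le_sum_of_subset_of_nonneg (Finset.filter_subset _ _)
              fun j _ _ => hA_nonneg j
    _ = (d : ℝ) * (∑ i, A i) + (d : ℝ) * (∑ j, A j) := by
          rw [← Finset.mul_sum, Finset.sum_const, Finset.card_univ, Fintype.card_fin,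
            nsmul_eq_mul]
    _ = 2 * (d : ℝ) * ∑ i, A i := by ring
    _ = (ϑ / 4) * ∑ i, β i * |Y i| ^ q := by
          rw [hA_def, ← Finset.mul_sum]
          have hd0 : (d : ℝ) ≠ 0 := ne_of_gt hdpos
          field_simp
          ring
  calc (q : ℝ) * ∑ i, β i * Y i * |Y i| ^ (q - 2) *
          (-(c i) * ξt i * ∑ j ∈ Finset.univ.filter (fun j => j < i), Y j)
      ≤ (q : ℝ) * ((ϑ / 4) * ∑ i, β i * |Y i| ^ q) :=
        mul_le_mul_of_nonneg_left hsum (by positivity)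
  _ = ((q : ℝ) * ϑ / 4) * ∑ i, β i * |Y i| ^ q := by ring
end

section
/- Let ρ ∈ (0,1)^d with Σ_{i=1}^d ρ_i = 1 and let n > 0. Then for every i ∈ {1,…,d} and every x ∈ ℝ^d with x ≥ 0 componentwise, there exist ξ ∈ [0,1] and ξ̃ ∈ [0,1] such that [x_i − (n − Σ_{j=1}^{i−1} x_j)⁺]⁺ = ξ(x_i − nρ_i) + ξ̃·Σ_{j=1}^{i−1}(x_j − nρ_j). -/
set_option autoImplicit false

lemma helper19 (A B T : ℝ) (hT : 0 < T) (hAB : T ≤ A + B) :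
    ∃ ξ ∈ Set.Icc (0:ℝ) 1, ∃ ξt ∈ Set.Icc (0:ℝ) 1, T = ξ * A + ξt * B := by
  rcases le_or_gt 0 A with hA | hA
  · rcases le_or_gt 0 B with hB | hB
    · have hABpos : 0 < A + B := lt_of_lt_of_le hT hAB
      refine ⟨T / (A + B), ⟨by positivity, by rw [div_le_one hABpos]; exact hAB⟩,
        T / (A + B), ⟨by positivity, by rw [div_le_one hABpos]; exact hAB⟩, ?_⟩
      field_simp
    · have hApos : 0 < A := by linarith
      refine ⟨T / A, ⟨by positivity, by rw [div_le_one hApos]; linarith⟩,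
        0, ⟨le_rfl, zero_le_one⟩, ?_⟩
      field_simp
      ring
  · have hBpos : 0 < B := by linarith
    refine ⟨0, ⟨le_rfl, zero_le_one⟩,
      T / B, ⟨by positivity, by rw [div_le_one hBpos]; linarith⟩, ?_⟩
    field_simp
    ring

theorem stmt19 (d : ℕ) (hd : 1 ≤ d)
    (ρ : Fin d → ℝ) (hρ : ∀ i, 0 < ρ i ∧ ρ i < 1) (hρsum : ∑ i, ρ i = 1)
    (n : ℝ) (hn : 0 < n) (i : Fin d) (x : Fin d → ℝ) (hx : ∀ j, 0 ≤ x j) :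
    ∃ ξ ∈ Set.Icc (0:ℝ) 1, ∃ ξt ∈ Set.Icc (0:ℝ) 1,
      max (x i - max (n - ∑ j ∈ Finset.univ.filter (fun j => j < i), x j) 0) 0
        = ξ * (x i - n * ρ i)
          + ξt * ∑ j ∈ Finset.univ.filter (fun j => j < i), (x j - n * ρ j) := by
  set F := Finset.univ.filter (fun j => j < i) with hF
  set S := ∑ j ∈ F, x j with hS
  set R := ∑ j ∈ F, ρ j with hR
  have hB : ∑ j ∈ F, (x j - n * ρ j) = S - n * R := by
    rw [Finset.sum_sub_distrib, Finset.mul_sum]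
  have hRle : R ≤ 1 - ρ i := by
    have hsub : F ⊆ Finset.univ.erase i := by
      intro j hj
      simp only [hF, Finset.mem_filter] at hj
      exact Finset.mem_erase.2 ⟨Fin.ne_of_lt hj.2, Finset.mem_univ j⟩
    have h1 : R ≤ ∑ j ∈ Finset.univ.erase i, ρ j := by
      apply Finset.sum_le_sum_of_subset_of_nonneg hsub
      intro j _ _; exact (hρ j).1.le
    have h2 : ∑ j ∈ Finset.univ.erase i, ρ j = 1 - ρ i := by
      have := Finset.add_sum_erase Finset.univ ρ (Finset.mem_univ i)
      linarith [hρsum ▸ this]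
    linarith
  by_cases hT : x i - max (n - S) 0 ≤ 0
  · refine ⟨0, ⟨le_rfl, zero_le_one⟩, 0, ⟨le_rfl, zero_le_one⟩, ?_⟩
    rw [max_eq_right hT]; ring
  · push_neg at hT
    rw [max_eq_left hT.le, hB]
    have hkey : x i - max (n - S) 0 ≤ (x i - n * ρ i) + (S - n * R) := by
      have h1 : n - S ≤ max (n - S) 0 := le_max_left _ _
      nlinarith [hn]
    exact helper19 _ _ _ hT hkey
end
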